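/- For all complex x, y, the series ∑_{n=0}^∞ q^{n(n−1)/2} (x ⊞_q y)^n/[n]_q! converges absolutely and E_q(x) · E_q(y) = ∑_{n=0}^∞ q^{n(n−1)/2} (x ⊞_q y)^n/[n]_q!. -/

import Mathlib

open Finset

/-- The q-number `[n]_q = (1 - q^n)/(1 - q)`. -/
noncomputable def qNum (q : ℝ) (n : ℕ) : ℝ := (1 - q ^ n) / (1 - q)

/-- The q-factorial `[n]_q! = ∏_{k=1}^n [k]_q`. -/
noncomputable def qFact (q : ℝ) (n : ℕ) : ℝ := ∏ k ∈ Finset.range n, qNum q (k + 1)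

/-- The q-binomial coefficient `[n choose k]_q`. -/
noncomputable def qBinom (q : ℝ) (n k : ℕ) : ℝ := qFact q n / (qFact q k * qFact q (n - k))

/-- The q-coaddition power `(x ⊞_q y)^n = ∑_{k=0}^n [n choose k]_q q^(k(k-n)) x^k y^(n-k)`. -/
noncomputable def coaddPow (q : ℝ) (x y : ℂ) (n : ℕ) : ℂ :=
  ∑ k ∈ Finset.range (n + 1),
    (qBinom q n k : ℂ) * (q : ℂ) ^ ((k : ℤ) * ((k : ℤ) - (n : ℤ))) * x ^ k * y ^ (n - k)

/-- The q-exponential `E_q(z) = ∑ q^(n(n-1)/2) z^n/[n]_q!`. -/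
noncomputable def bigQExp (q : ℝ) (z : ℂ) : ℂ :=
  ∑' n : ℕ, (q : ℂ) ^ (n * (n - 1) / 2) * z ^ n / (qFact q n : ℂ)

lemma half_mul (m : ℕ) : ((m*(m-1)/2 : ℕ) : ℤ) * 2 = (m:ℤ) * ((m:ℤ) - 1) := by
  rcases m with _ | s
  · simp
  · have hd : ((s+1)*((s+1)-1))/2*2 = (s+1)*((s+1)-1) :=
      Nat.div_mul_cancel (by simpa [Nat.mul_comm] using (Nat.even_mul_succ_self s).two_dvd)
    have h := congrArg (Nat.cast : ℕ → ℤ) hd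
    push_cast at h ⊢
    linarith [h]

lemma halfsucc (n : ℕ) : (n+1)*((n+1)-1)/2 = n*(n-1)/2 + n := by
  have h1 := half_mul (n+1)
  have h2 := half_mul n
  have h : (((n+1)*((n+1)-1)/2 : ℕ) : ℤ) = ((n*(n-1)/2 + n : ℕ) : ℤ) := by
    push_cast at h1 h2 ⊢
    linarith
  exact_mod_cast h

lemma exp_eq (k l : ℕ) :
    ((k*(k-1)/2 : ℕ) : ℤ) + ((l*(l-1)/2 : ℕ) : ℤ) + (k*l : ℕ) =
      (((k+l)*((k+l)-1)/2 : ℕ) : ℤ) := by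
  have h1 := half_mul k
  have h2 := half_mul l
  have h3 := half_mul (k+l)
  push_cast at h1 h2 h3 ⊢
  nlinarith [h1, h2, h3]

lemma qNum_pos {q : ℝ} (hq0 : 0 < q) (hq1 : q < 1) (n : ℕ) : 0 < qNum q (n+1) := by
  unfold qNum
  have h1 : q ^ (n+1) < 1 := pow_lt_one₀ hq0.le hq1 (by omega)
  have h2 : (0:ℝ) < 1 - q := by linarith
  exact div_pos (by linarith) h2

lemma one_le_qNum {q : ℝ} (hq0 : 0 < q) (hq1 : q < 1) (n : ℕ) : 1 ≤ qNum q (n+1) := by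
  unfold qNum
  rw [le_div_iff₀ (by linarith)]
  have : q ^ (n+1) ≤ q := by
    calc q ^ (n+1) ≤ q ^ 1 := pow_le_pow_of_le_one hq0.le hq1.le (by omega)
    _ = q := pow_one q
  linarith

lemma qFact_pos {q : ℝ} (hq0 : 0 < q) (hq1 : q < 1) (n : ℕ) : 0 < qFact q n :=
  Finset.prod_pos fun k _ => qNum_pos hq0 hq1 k

lemma qFact_succ (q : ℝ) (n : ℕ) : qFact q (n+1) = qFact q n * qNum q (n+1) :=
  Finset.prod_range_succ _ _

lemma one_le_qFact {q : ℝ} (hq0 : 0 < q) (hq1 : q < 1) : ∀ n : ℕ, 1 ≤ qFact q n := by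
  intro n
  induction n with
  | zero => simp [qFact]
  | succ n ih => rw [qFact_succ]; nlinarith [one_le_qNum hq0 hq1 n]

lemma qexp_norm {q : ℝ} (hq0 : 0 < q) (z : ℂ) (n : ℕ) (F : ℝ) (hF : 0 < F) :
    ‖(q:ℂ)^(n*(n-1)/2) * z^n / (F : ℂ)‖ = q^(n*(n-1)/2) * ‖z‖^n / F := by
  rw [norm_div, norm_mul, norm_pow, norm_pow, Complex.norm_real, Complex.norm_real,
    Real.norm_of_nonneg hq0.le, Real.norm_of_nonneg hF.le]

lemma qexp_summable {q : ℝ} (hq0 : 0 < q) (hq1 : q < 1) (z : ℂ) :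
    Summable (fun n : ℕ => ‖(q:ℂ)^(n*(n-1)/2) * z^n / (qFact q n : ℂ)‖) := by
  have hnorm : ∀ n : ℕ, ‖(q:ℂ)^(n*(n-1)/2) * z^n / (qFact q n : ℂ)‖
      = q^(n*(n-1)/2) * ‖z‖^n / qFact q n :=
    fun n => qexp_norm hq0 z n _ (qFact_pos hq0 hq1 n)
  simp only [hnorm]
  apply summable_of_ratio_norm_eventually_le (r := 1/2) (by norm_num)
  have htend : Filter.Tendsto (fun n : ℕ => q^n * ‖z‖) Filter.atTop (nhds 0) := by
    simpa using (tendsto_pow_atTop_nhds_zero_of_lt_one hq0.le hq1).mul_const ‖z‖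
  filter_upwards [htend.eventually_lt_const (by norm_num : (0:ℝ) < 1/2)] with n hn
  have hFn := qFact_pos hq0 hq1 n
  have hFn1 := qFact_pos hq0 hq1 (n+1)
  have hterm_nonneg : 0 ≤ q^(n*(n-1)/2) * ‖z‖^n / qFact q n := by positivity
  rw [Real.norm_of_nonneg (by positivity), Real.norm_of_nonneg hterm_nonneg]
  have heq : q^((n+1)*((n+1)-1)/2) * ‖z‖^(n+1) / qFact q (n+1)
      = (q^n * ‖z‖ * (q^(n*(n-1)/2) * ‖z‖^n / qFact q n)) / qNum q (n+1) := by
    rw [halfsucc, pow_add, qFact_succ, pow_succ]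
    field_simp
  rw [heq]
  calc (q^n * ‖z‖ * (q^(n*(n-1)/2) * ‖z‖^n / qFact q n)) / qNum q (n+1)
      ≤ q^n * ‖z‖ * (q^(n*(n-1)/2) * ‖z‖^n / qFact q n) :=
        div_le_self (by positivity) (one_le_qNum hq0 hq1 n)
    _ ≤ 1/2 * (q^(n*(n-1)/2) * ‖z‖^n / qFact q n) :=
        mul_le_mul_of_nonneg_right hn.le hterm_nonneg

lemma key_term {q : ℝ} (hq0 : 0 < q) (hq1 : q < 1) (x y : ℂ) (n : ℕ) :
    ∑ k ∈ range (n+1), ((q:ℂ)^(k*(k-1)/2) * x^k / (qFact q k : ℂ)) *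
        ((q:ℂ)^((n-k)*((n-k)-1)/2) * y^(n-k) / (qFact q (n-k) : ℂ))
      = (q:ℂ)^(n*(n-1)/2) * coaddPow q x y n / (qFact q n : ℂ) := by
  unfold coaddPow
  rw [Finset.mul_sum, Finset.sum_div]
  refine Finset.sum_congr rfl fun k hk => ?_
  have hkn : k ≤ n := by simpa [Nat.lt_succ_iff] using hk
  have hqC : (q:ℂ) ≠ 0 := by exact_mod_cast hq0.ne'
  have hFk : (qFact q k : ℂ) ≠ 0 := by exact_mod_cast (qFact_pos hq0 hq1 k).ne'
  have hFl : (qFact q (n-k) : ℂ) ≠ 0 := by exact_mod_cast (qFact_pos hq0 hq1 (n-k)).ne'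
  have hFn : (qFact q n : ℂ) ≠ 0 := by exact_mod_cast (qFact_pos hq0 hq1 n).ne'
  have hbinom : (qBinom q n k : ℂ) = (qFact q n : ℂ) / ((qFact q k : ℂ) * (qFact q (n-k) : ℂ)) := by
    unfold qBinom; push_cast; ring
  have hzpow : (q:ℂ)^((k:ℤ)*((k:ℤ)-(n:ℤ))) = ((q:ℂ)^(k*(n-k)))⁻¹ := by
    rw [show (k:ℤ)*((k:ℤ)-(n:ℤ)) = -((k*(n-k) : ℕ) : ℤ) by
      push_cast [Nat.cast_sub hkn]; ring]
    rw [zpow_neg, zpow_natCast]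
  have hexp : k*(k-1)/2 + (n-k)*((n-k)-1)/2 + k*(n-k) = n*(n-1)/2 := by
    have h := exp_eq k (n-k)
    rw [Nat.add_sub_cancel' hkn] at h
    exact_mod_cast h
  have hcpow : (q:ℂ)^(k*(k-1)/2) * (q:ℂ)^((n-k)*((n-k)-1)/2) * (q:ℂ)^(k*(n-k))
      = (q:ℂ)^(n*(n-1)/2) := by
    rw [← pow_add, ← pow_add, hexp]
  have hqm : ((q:ℂ)^(k*(n-k))) ≠ 0 := pow_ne_zero _ hqC
  rw [hbinom, hzpow]
  field_simp
  linear_combination (x^k * y^(n-k)) * hcpow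

theorem stmt_2 (q : ℝ) (hq0 : 0 < q) (hq1 : q < 1) (x y : ℂ) :
    Summable (fun n : ℕ => ‖(q : ℂ) ^ (n * (n - 1) / 2) * coaddPow q x y n / (qFact q n : ℂ)‖) ∧
      bigQExp q x * bigQExp q y =
        ∑' n : ℕ, (q : ℂ) ^ (n * (n - 1) / 2) * coaddPow q x y n / (qFact q n : ℂ) := by
  have hx := qexp_summable hq0 hq1 x
  have hy := qexp_summable hq0 hq1 y
  constructor
  · have hs := summable_norm_sum_mul_range_of_summable_norm hx hy
    simpa only [key_term hq0 hq1 x y] using hs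
  · unfold bigQExp
    rw [tsum_mul_tsum_eq_tsum_sum_range_of_summable_norm hx hy]
    exact tsum_congr (key_term hq0 hq1 x y)
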